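/- Let G = (V, E) be a simple graph on n ≥ 2 vertices, let ε ∈ [0,1], and let X be a random subset of V obtained by including each vertex independently with probability 1/(9n^ε). Then with probability at least 1 − 1/n, every pair of vertices {j,l} ∈ Δ(X) satisfies m({j,l}) < 27 n^ε ln n. -/

import Mathlib

open MeasureTheory Finset

-- sum over biUnion ≤ double sum, nonneg
lemma sum_biUnion_le' {ι α : Type*} [DecidableEq α] (s : Finset ι) (t : ι → Finset α)
    (f : α → ℝ) (hf : ∀ a, 0 ≤ f a) :
    ∑ x ∈ s.biUnion t, f x ≤ ∑ i ∈ s, ∑ x ∈ t i, f x := by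
  classical
  induction s using Finset.induction with
  | empty => simp
  | insert _ _ hni ih =>
    rename_i a s'
    rw [Finset.biUnion_insert, Finset.sum_insert hni]
    calc ∑ x ∈ t a ∪ s'.biUnion t, f x
        ≤ ∑ x ∈ t a, f x + ∑ x ∈ s'.biUnion t, f x := by
          have := Finset.sum_union_inter (s₁ := t a) (s₂ := s'.biUnion t) (f := f)
          have h2 : 0 ≤ ∑ x ∈ t a ∩ s'.biUnion t, f x := Finset.sum_nonneg fun x _ => hf x
          linarith
      _ ≤ _ := by gcongr

-- measure of {X ∈ 𝒜} as a sum
lemma meas_mem_sum {Ω : Type*} [MeasurableSpace Ω] (μ : Measure Ω) [IsProbabilityMeasure μ]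
    {V : Type*} [DecidableEq V] (X : Ω → Finset V)
    (hmeas : ∀ F : Finset V, MeasurableSet {ω | X ω = F}) (𝒜 : Finset (Finset V)) :
    (μ {ω | X ω ∈ 𝒜}).toReal = ∑ F ∈ 𝒜, (μ {ω | X ω = F}).toReal := by
  have hset : {ω | X ω ∈ 𝒜} = ⋃ F ∈ 𝒜, {ω | X ω = F} := by
    ext ω; simp
  rw [hset, measure_biUnion_finset ?_ (fun F _ => hmeas F), ENNReal.toReal_sum
    (fun F _ => measure_ne_top μ _)]
  intro F _ F' _ hne
  simp only [Function.onFun, Set.disjoint_left]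
  rintro ω (h1 : X ω = F) (h2 : X ω = F')
  exact hne (h1 ▸ h2 ▸ rfl)

-- binomial identity
lemma sum_inter_empty {V : Type*} [Fintype V] [DecidableEq V] (p q : ℝ) (hpq : p + q = 1)
    (S : Finset V) :
    ∑ F ∈ Finset.univ.filter (fun F : Finset V => F ∩ S = ∅),
      p ^ F.card * q ^ (Fintype.card V - F.card) = q ^ S.card := by
  classical
  have hfil : Finset.univ.filter (fun F : Finset V => F ∩ S = ∅) = Sᶜ.powerset := by
    ext F
    simp only [Finset.mem_filter, Finset.mem_univ, true_and, Finset.mem_powerset,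
      ← Finset.disjoint_iff_inter_eq_empty, ← le_compl_iff_disjoint_right, Finset.le_iff_subset]
  rw [hfil]
  have hcard : Sᶜ.card + S.card = Fintype.card V := by
    have := Finset.card_le_univ S
    rw [Finset.card_compl]; omega
  have hterm : ∀ F ∈ Sᶜ.powerset, p ^ F.card * q ^ (Fintype.card V - F.card)
      = (p ^ F.card * q ^ (Sᶜ.card - F.card)) * q ^ S.card := by
    intro F hF
    have hle : F.card ≤ Sᶜ.card := Finset.card_le_card (Finset.mem_powerset.1 hF)
    have : Fintype.card V - F.card = (Sᶜ.card - F.card) + S.card := by omega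
    rw [this, pow_add]; ring
  rw [Finset.sum_congr rfl hterm, ← Finset.sum_mul]
  have : ∑ F ∈ Sᶜ.powerset, p ^ F.card * q ^ (Sᶜ.card - F.card) = 1 := by
    rw [Finset.sum_powerset_apply_card (fun m => p ^ m * q ^ (Sᶜ.card - m))]
    have := add_pow p q Sᶜ.card
    rw [hpq, one_pow] at this
    rw [this]
    exact Finset.sum_congr rfl fun m _ => by rw [nsmul_eq_mul]; ring
  rw [this, one_mul]

/-- `m({j,l})`: the number of common neighbors of `j` and `l` in `G`. -/
def commonNbrs {V : Type*} [Fintype V] (G : SimpleGraph V) [DecidableRel G.Adj]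
    (j l : V) : ℕ :=
  (Finset.univ.filter fun k => G.Adj j k ∧ G.Adj l k).card

/-- `{u,v} ∈ Δ(X)`: no vertex of `X` is adjacent to both `u` and `v`. -/
def inDelta {V : Type*} (G : SimpleGraph V) (X : Finset V) (u v : V) : Prop :=
  ∀ x ∈ X, ¬ (G.Adj x u ∧ G.Adj x v)

/-- **Statement (2) in the proof of Lemma 3 of the paper.**
Let `G = (V,E)` be a simple graph on `n ≥ 2` vertices, `ε ∈ [0,1]`, and let `X` be a
random subset of `V` obtained by including each vertex independently with probability
`1/(9 n^ε)`.  Then with probability at least `1 - 1/n`, every pair of (distinct)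
vertices `{j,l} ∈ Δ(X)` satisfies `m({j,l}) < 27 n^ε ln n`. -/
theorem pairs_in_Delta_have_few_common_neighbors
    {Ω : Type*} [MeasurableSpace Ω] (μ : Measure Ω) [IsProbabilityMeasure μ]
    {V : Type*} [Fintype V] [DecidableEq V]
    (G : SimpleGraph V) [DecidableRel G.Adj]
    (n : ℕ) (hn : n = Fintype.card V) (hn2 : 2 ≤ n)
    (ε : ℝ) (hε0 : 0 ≤ ε) (hε1 : ε ≤ 1)
    (X : Ω → Finset V)
    (hmeas : ∀ F : Finset V, MeasurableSet {ω | X ω = F})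
    (hdist : ∀ F : Finset V, (μ {ω | X ω = F}).toReal =
      (1 / (9 * (n : ℝ) ^ ε)) ^ F.card *
        (1 - 1 / (9 * (n : ℝ) ^ ε)) ^ (n - F.card)) :
    1 - 1 / (n : ℝ) ≤
      (μ {ω | ∀ j l : V, j ≠ l → inDelta G (X ω) j l →
        (commonNbrs G j l : ℝ) < 27 * (n : ℝ) ^ ε * Real.log n}).toReal := by
  classical
  set p : ℝ := 1 / (9 * (n : ℝ) ^ ε) with hp_def
  set q : ℝ := 1 - p with hq_def
  have hn0 : (0:ℝ) < n := by positivity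
  have hn1 : (1:ℝ) ≤ (n : ℝ) ^ ε := Real.one_le_rpow (by exact_mod_cast hn2.trans' (by norm_num)) hε0
  have hx0 : (0:ℝ) < (n : ℝ) ^ ε := by linarith
  have hp0 : 0 < p := by positivity
  have hp9 : p ≤ 1 / 9 := by
    rw [hp_def, div_le_div_iff₀ (by positivity) (by norm_num)]
    linarith
  have hq0 : (0:ℝ) ≤ q := by rw [hq_def]; linarith
  have hpq : p + q = 1 := by rw [hq_def]; ring
  -- weight function
  set w : Finset V → ℝ := fun F => p ^ F.card * q ^ (n - F.card) with hw_def
  have hw0 : ∀ F, 0 ≤ w F := fun F => by positivity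
  -- the good predicate
  set GoodP : Finset V → Prop := fun F => ∀ j l : V, j ≠ l → inDelta G F j l →
      (commonNbrs G j l : ℝ) < 27 * (n : ℝ) ^ ε * Real.log n with hGoodP
  -- express the event
  have hEvent : {ω | ∀ j l : V, j ≠ l → inDelta G (X ω) j l →
        (commonNbrs G j l : ℝ) < 27 * (n : ℝ) ^ ε * Real.log n}
      = {ω | X ω ∈ Finset.univ.filter GoodP} := by
    ext ω; simp [hGoodP]
  rw [hEvent, meas_mem_sum μ X hmeas]
  have hdist' : ∀ F ∈ Finset.univ.filter GoodP, (μ {ω | X ω = F}).toReal = w F := fun F _ => hdist F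
  rw [Finset.sum_congr rfl hdist']
  -- total mass is 1
  have htotal : ∑ F : Finset V, w F = 1 := by
    have h1 : {ω | X ω ∈ (Finset.univ : Finset (Finset V))} = Set.univ := by ext ω; simp
    have := meas_mem_sum μ X hmeas Finset.univ
    rw [h1, measure_univ, ENNReal.toReal_one] at this
    exact (Finset.sum_congr rfl fun F _ => (hdist F).symm).trans this.symm
  -- split into good and bad
  have hsplit : ∑ F ∈ Finset.univ.filter GoodP, w F
      = 1 - ∑ F ∈ Finset.univ.filter (fun F => ¬ GoodP F), w F := by
    have := Finset.sum_filter_add_sum_filter_not Finset.univ GoodP w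
    rw [htotal] at this; linarith
  rw [hsplit]
  -- it suffices to bound the bad mass
  have hbad : ∑ F ∈ Finset.univ.filter (fun F => ¬ GoodP F), w F ≤ 1 / (n : ℝ) := by
    -- common-neighbor sets
    set N : V → V → Finset V := fun j l => Finset.univ.filter fun k => G.Adj j k ∧ G.Adj l k
      with hN
    have hNcard : ∀ j l, (N j l).card = commonNbrs G j l := fun j l => rfl
    set Pairs : Finset (V × V) := Finset.univ.filter
      (fun jl : V × V => jl.1 ≠ jl.2 ∧ 27 * (n : ℝ) ^ ε * Real.log n ≤ (commonNbrs G jl.1 jl.2 : ℝ))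
      with hPairs
    have hsub : Finset.univ.filter (fun F => ¬ GoodP F) ⊆
        Pairs.biUnion (fun jl => Finset.univ.filter (fun F : Finset V => F ∩ N jl.1 jl.2 = ∅)) := by
      intro F hF
      rw [Finset.mem_filter] at hF
      simp only [hGoodP, not_forall] at hF
      obtain ⟨j, l, hjl, hdel, hm⟩ := hF.2
      rw [Finset.mem_biUnion]
      refine ⟨(j, l), by simp [hPairs, hjl, not_lt.1 hm], ?_⟩
      simp only [Finset.mem_filter, Finset.mem_univ, true_and]
      rw [← Finset.disjoint_iff_inter_eq_empty, Finset.disjoint_right]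
      intro k hk hkF
      simp only [hN, Finset.mem_filter, Finset.mem_univ, true_and] at hk
      exact hdel k hkF ⟨hk.1.symm, hk.2.symm⟩
    calc ∑ F ∈ Finset.univ.filter (fun F => ¬ GoodP F), w F
        ≤ ∑ F ∈ Pairs.biUnion (fun jl => Finset.univ.filter
            (fun F : Finset V => F ∩ N jl.1 jl.2 = ∅)), w F :=
          Finset.sum_le_sum_of_subset_of_nonneg hsub (fun F _ _ => hw0 F)
      _ ≤ ∑ jl ∈ Pairs, ∑ F ∈ Finset.univ.filter
            (fun F : Finset V => F ∩ N jl.1 jl.2 = ∅), w F :=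
          sum_biUnion_le' _ _ _ hw0
      _ ≤ ∑ _jl ∈ Pairs, ((n:ℝ)⁻¹) ^ 3 := by
          refine Finset.sum_le_sum fun jl hjl => ?_
          have hsum : ∑ F ∈ Finset.univ.filter (fun F : Finset V => F ∩ N jl.1 jl.2 = ∅), w F
              = q ^ (N jl.1 jl.2).card := by
            rw [hw_def, hn]
            exact sum_inter_empty p q hpq _
          rw [hsum, hNcard]
          set m : ℕ := commonNbrs G jl.1 jl.2 with hm
          have hmge : 27 * (n : ℝ) ^ ε * Real.log n ≤ (m : ℝ) := by
            simp only [hPairs, Finset.mem_filter] at hjl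
            exact hjl.2.2
          have hlog0 : 0 ≤ Real.log n := Real.log_nonneg (by exact_mod_cast hn2.trans' (by norm_num))
          have hqexp : q ≤ Real.exp (-p) := by
            have := Real.add_one_le_exp (-p)
            rw [hq_def]; linarith
          have h1 : q ^ m ≤ Real.exp (-p) ^ m := pow_le_pow_left₀ hq0 hqexp m
          have h2 : Real.exp (-p) ^ m = Real.exp (-(p * m)) := by
            rw [← Real.exp_nat_mul]; ring_nf
          have h3 : 3 * Real.log n ≤ p * m := by
            calc 3 * Real.log n = p * (27 * (n : ℝ) ^ ε * Real.log n) := by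
                  rw [hp_def]; field_simp; ring
              _ ≤ p * m := by
                  exact mul_le_mul_of_nonneg_left hmge hp0.le
          have h4 : Real.exp (-(p * m)) ≤ Real.exp (-(3 * Real.log n)) := by
            apply Real.exp_le_exp.2; linarith
          have h5 : Real.exp (-(3 * Real.log n)) = ((n:ℝ)⁻¹) ^ 3 := by
            rw [show -(3 * Real.log n) = (3:ℕ) * (-Real.log n) by ring, Real.exp_nat_mul,
              ← Real.log_inv, Real.exp_log (by positivity)]
          linarith [h1, h2 ▸ h1, h4, h5 ▸ h4]
      _ ≤ (n:ℝ)^2 * ((n:ℝ)⁻¹) ^ 3 := by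
          rw [Finset.sum_const, nsmul_eq_mul]
          have hcard : (Pairs.card : ℝ) ≤ (n:ℝ)^2 := by
            have h1 : Pairs.card ≤ Fintype.card (V × V) := Finset.card_le_univ Pairs
            have h2 : Fintype.card (V × V) = n * n := by
              rw [Fintype.card_prod, ← hn]
            have : (Pairs.card : ℝ) ≤ (n * n : ℕ) := by exact_mod_cast h1.trans_eq h2
            push_cast at this ⊢; nlinarith
          have hpos : (0:ℝ) ≤ ((n:ℝ)⁻¹) ^ 3 := by positivity
          exact mul_le_mul_of_nonneg_right hcard hpos
      _ = 1 / (n : ℝ) := by field_simp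
  linarith
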